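/- Let (T, 𝒯, μ) be a finite positive measure space, S a separable complete metric space, and φ : T × S → ℝ̄ a measurable function (for the product σ-algebra). Then there is a set T' ∈ 𝒯 with μ(T \ T') = 0 such that the function t ↦ sup_{s∈S} φ(t,s) restricted to T' is measurable. -/

import Mathlib

open MeasureTheory Set Filter
open scoped ENNReal NNReal symmDiff
namespace SuslinProj

def takeL (σ : ℕ → ℕ) (n : ℕ) : List ℕ := (List.range n).map σ

@[simp] lemma takeL_length (σ : ℕ → ℕ) (n : ℕ) : (takeL σ n).length = n := by
  simp [takeL]

@[simp] lemma takeL_zero (σ : ℕ → ℕ) : takeL σ 0 = [] := rfl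

lemma takeL_succ (σ : ℕ → ℕ) (n : ℕ) : takeL σ (n + 1) = takeL σ n ++ [σ n] := by
  simp [takeL, List.range_succ]

lemma takeL_take (σ : ℕ → ℕ) {m n : ℕ} (h : m ≤ n) :
    (takeL σ n).take m = takeL σ m := by
  simp [takeL, ← List.map_take, List.take_range, Nat.min_eq_left h]

lemma takeL_prefix (σ : ℕ → ℕ) {m n : ℕ} (h : m ≤ n) : takeL σ m <+: takeL σ n := by
  rw [← takeL_take σ h]; exact List.take_prefix _ _

lemma takeL_eq_iff {σ τ : ℕ → ℕ} {n : ℕ} :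
    takeL σ n = takeL τ n ↔ ∀ i < n, σ i = τ i := by
  simp [takeL, List.map_eq_map_iff]

lemma takeL_getD {σ : ℕ → ℕ} {n i : ℕ} (h : i < n) : (takeL σ n).getD i 0 = σ i := by
  rw [List.getD_eq_getElem _ _ (by simpa using h)]
  simp [takeL]

lemma getD_concat_length (l : List ℕ) (k : ℕ) : (l ++ [k]).getD l.length 0 = k := by
  rw [List.getD_append_right _ _ _ _ (le_refl _), Nat.sub_self]; rfl

lemma getD_concat_lt (l : List ℕ) (k : ℕ) {i : ℕ} (h : i < l.length) :
    (l ++ [k]).getD i 0 = l.getD i 0 :=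
  List.getD_append _ _ _ _ h

/-- The Suslin operation applied to a scheme of sets. -/
def Suslin {α : Type*} (A : List ℕ → Set α) : Set α :=
  {t | ∃ σ : ℕ → ℕ, ∀ n, t ∈ A (takeL σ n)}

/-- Iteratively extend a list using a rule `g`. -/
def built (g : List ℕ → ℕ) : ℕ → List ℕ
  | 0 => []
  | n + 1 => built g n ++ [g (built g n)]

@[simp] lemma built_length (g : List ℕ → ℕ) (n : ℕ) : (built g n).length = n := by
  induction n with
  | zero => rfl
  | succ n ih => simp [built, ih]

lemma takeL_succ_eq_cons (σ : ℕ → ℕ) (n : ℕ) :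
    takeL σ (n + 1) = σ 0 :: takeL (fun j => σ (j + 1)) n := by
  simp [takeL, List.range_succ_eq_map, List.map_map]

lemma takeL_cons (k : ℕ) (σ : ℕ → ℕ) (n : ℕ) :
    takeL (fun m => Nat.rec k (fun j _ => σ j) m) (n + 1) = k :: takeL σ n := by
  rw [takeL_succ_eq_cons]; rfl

section Part1

variable {T : Type*} [MeasurableSpace T] (μ : Measure T) [IsFiniteMeasure μ]
variable (A : List ℕ → Set T)

/-- Branches bounded by the entries of `l` on the first `l.length` levels. -/
def Atil (l : List ℕ) : Set T :=
  {t | ∃ σ : ℕ → ℕ, (∀ i < l.length, σ i ≤ l.getD i 0) ∧ ∀ n, t ∈ A (takeL σ n)}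

omit [MeasurableSpace T] in
lemma Atil_nil : Atil A [] = Suslin A := by
  ext t; simp [Atil, Suslin]

lemma exists_step (l : List ℕ) {δ : ℝ≥0∞} (hδ : δ ≠ 0) :
    ∃ k : ℕ, μ (Atil A l) ≤ μ (Atil A (l ++ [k])) + δ := by
  have hbdd : ∀ k : ℕ, ∀ σ : ℕ → ℕ,
      ((∀ i < (l ++ [k]).length, σ i ≤ (l ++ [k]).getD i 0) ↔
        (∀ i < l.length, σ i ≤ l.getD i 0) ∧ σ l.length ≤ k) := by
    intro k σ
    constructor
    · intro h
      refine ⟨fun i hi => ?_, ?_⟩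
      · have := h i (by simp; omega)
        rwa [getD_concat_lt _ _ hi] at this
      · have := h l.length (by simp)
        rwa [getD_concat_length] at this
    · rintro ⟨h1, h2⟩ i hi
      rcases lt_or_ge i l.length with hi' | hi'
      · rw [getD_concat_lt _ _ hi']; exact h1 i hi'
      · have : i = l.length := by simp at hi; omega
        subst this
        rwa [getD_concat_length]
  have hmonok : Monotone (fun k => Atil A (l ++ [k])) := by
    intro k k' hk t ht
    obtain ⟨σ, hb, hσ⟩ := ht
    exact ⟨σ, (hbdd k' σ).2 ⟨((hbdd k σ).1 hb).1, le_trans ((hbdd k σ).1 hb).2 hk⟩, hσ⟩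
  have hunion : (⋃ k, Atil A (l ++ [k])) = Atil A l := by
    ext t
    constructor
    · rintro ⟨_, ⟨k, rfl⟩, σ, hb, hσ⟩
      exact ⟨σ, ((hbdd k σ).1 hb).1, hσ⟩
    · rintro ⟨σ, hb, hσ⟩
      exact mem_iUnion.2 ⟨σ l.length, σ, (hbdd _ σ).2 ⟨hb, le_refl _⟩, hσ⟩
  have hsup : μ (Atil A l) = ⨆ k, μ (Atil A (l ++ [k])) := by
    rw [← hunion]; exact hmonok.measure_iUnion
  set c := μ (Atil A l) with hc
  rcases le_or_gt c δ with h | h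
  · exact ⟨0, le_trans h le_add_self⟩
  · have hcne : c ≠ ⊤ := measure_ne_top μ _
    have hlt : c - δ < c := ENNReal.sub_lt_self hcne (((zero_le (a := δ)).trans_lt h).ne') hδ
    have hlt2 : c - δ < ⨆ k, μ (Atil A (l ++ [k])) := lt_of_lt_of_le hlt (le_of_eq hsup)
    rcases lt_iSup_iff.1 hlt2 with ⟨k, hk⟩
    refine ⟨k, ?_⟩
    calc c = c - δ + δ := (tsub_add_cancel_of_le h.le).symm
    _ ≤ μ (Atil A (l ++ [k])) + δ := add_le_add_left hk.le δ

variable {A}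

/-- Main inner approximation lemma (Lusin–Sierpiński). -/
theorem inner_approx (hA : ∀ s, MeasurableSet (A s))
    (hmono : ∀ (σ : ℕ → ℕ) m n, m ≤ n → A (takeL σ n) ⊆ A (takeL σ m))
    {ε : ℝ≥0∞} (hε : ε ≠ 0) :
    ∃ B : Set T, MeasurableSet B ∧ B ⊆ Suslin A ∧ μ (Suslin A) ≤ μ B + ε := by
  obtain ⟨δ, hδpos, hδsum⟩ := ENNReal.exists_pos_sum_of_countable hε ℕ
  classical
  have hδne : ∀ n : ℕ, ((δ n : ℝ≥0∞)) ≠ 0 := fun n => by exact_mod_cast (hδpos n).ne'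
  set g : List ℕ → ℕ :=
    fun l => Classical.choose (exists_step μ A l (hδne l.length)) with hg
  set L : ℕ → List ℕ := built g with hLdef
  have hlen : ∀ n, (L n).length = n := fun n => by rw [hLdef]; simp
  have hLstep : ∀ n, μ (Atil A (L n)) ≤ μ (Atil A (L (n + 1))) + δ n := by
    intro n
    have h1 : μ (Atil A (L n)) ≤ μ (Atil A (L n ++ [g (L n)])) + δ ((L n).length) :=
      Classical.choose_spec (exists_step μ A (L n) (hδne (L n).length))
    have h2 : L (n + 1) = L n ++ [g (L n)] := rfl
    rw [hlen] at h1
    rw [h2]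
    exact h1
  have hLpre : ∀ m n, m ≤ n → L m <+: L n := by
    intro m n h
    induction n with
    | zero => simp only [Nat.le_zero] at h; subst h; exact List.prefix_refl _
    | succ n ih =>
      rcases Nat.lt_or_ge m (n+1) with h' | h'
      · exact (ih (by omega)).trans ⟨[g (L n)], rfl⟩
      · have : m = n + 1 := by omega
        subst this; exact List.prefix_refl _
  set u : ℕ → ℕ := fun n => g (L n) with hu
  have hLget : ∀ n i, i < n → (L n).getD i 0 = u i := by
    intro n i hi
    obtain ⟨r, hr⟩ := hLpre (i+1) n hi
    have h2 : L (i + 1) = L i ++ [u i] := rfl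
    rw [← hr, h2, List.append_assoc,
      List.getD_append_right _ _ _ _ (by rw [hlen])]
    rw [hlen, Nat.sub_self]; rfl
  -- accumulated bound
  have hchain : ∀ n, μ (Suslin A) ≤ μ (Atil A (L n)) + ∑ k ∈ Finset.range n, (δ k : ℝ≥0∞) := by
    intro n
    induction n with
    | zero =>
      have : L 0 = [] := rfl
      simp [this, Atil_nil]
    | succ n ih =>
      calc μ (Suslin A) ≤ μ (Atil A (L n)) + ∑ k ∈ Finset.range n, (δ k : ℝ≥0∞) := ih
      _ ≤ (μ (Atil A (L (n+1))) + δ n) + ∑ k ∈ Finset.range n, (δ k : ℝ≥0∞) :=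
          add_le_add_left (hLstep n) _
      _ = μ (Atil A (L (n+1))) + ∑ k ∈ Finset.range (n+1), (δ k : ℝ≥0∞) := by
          rw [Finset.sum_range_succ]; ring
  -- the measurable approximations
  set Bn : ℕ → Set T := fun n =>
    ⋃ (σ : ℕ → ℕ) (_ : ∀ i < n, σ i ≤ u i), A (takeL σ n) with hBn
  have hBnmeas : ∀ n, MeasurableSet (Bn n) := by
    intro n
    have : Bn n = ⋃ (f : (i : Fin n) → Fin (u i.1 + 1)),
        A (takeL (fun j => if h : j < n then (f ⟨j, h⟩).1 else 0) n) := by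
      ext t
      simp only [hBn, mem_iUnion]
      constructor
      · rintro ⟨σ, hb, ht⟩
        refine ⟨fun i => ⟨σ i.1, Nat.lt_succ_of_le (hb i.1 i.2)⟩, ?_⟩
        have heq : takeL (fun j => if h : j < n then σ j else 0) n = takeL σ n := by
          rw [takeL_eq_iff]; intro i hi; simp [hi]
        rw [heq]; exact ht
      · rintro ⟨f, ht⟩
        refine ⟨fun j => if h : j < n then (f ⟨j, h⟩).1 else 0, fun i hi => ?_, ht⟩
        simp only [hi, dif_pos]
        exact Nat.lt_succ_iff.1 (f ⟨i, hi⟩).isLt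
    rw [this]
    exact MeasurableSet.iUnion (fun f => hA _)
  have hAtilBn : ∀ m n, m ≤ n → Atil A (L n) ⊆ Bn m := by
    rintro m n hmn t ⟨σ, hb, hσ⟩
    refine mem_iUnion.2 ⟨σ, mem_iUnion.2 ⟨fun i hi => ?_, hσ m⟩⟩
    have := hb i (by rw [hlen]; omega)
    rwa [hLget n i (by omega)] at this
  set Cn : ℕ → Set T := fun n => ⋂ m ∈ Finset.range (n+1), Bn m with hCn
  have hCnmeas : ∀ n, MeasurableSet (Cn n) := fun n =>
    MeasurableSet.biInter (Finset.range (n+1)).countable_toSet (fun m _ => hBnmeas m)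
  have hCnanti : Antitone Cn := by
    intro m n hmn x hx
    exact mem_iInter₂.2 fun k hk => mem_iInter₂.1 hx k
      (by simp only [Finset.mem_range] at hk ⊢; omega)
  have hAtilCn : ∀ n, Atil A (L n) ⊆ Cn n := by
    intro n
    exact subset_iInter₂ (fun m hm => hAtilBn m n (by simp only [Finset.mem_range] at hm; omega))
  set B : Set T := ⋂ n, Cn n with hB
  have hBmeas : MeasurableSet B := MeasurableSet.iInter hCnmeas
  -- B ⊆ Suslin A via König's lemma
  have hBsub : B ⊆ Suslin A := by
    intro t ht
    have htBn : ∀ n, t ∈ Bn n := by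
      intro n
      exact (mem_iInter₂.1 (mem_iInter.1 ht n)) n (by simp)
    set Good : List ℕ → Prop := fun l =>
      ∀ n, l.length ≤ n → ∃ σ : ℕ → ℕ, (∀ i < n, σ i ≤ u i) ∧
        takeL σ l.length = l ∧ t ∈ A (takeL σ n) with hGood
    have good_nil : Good [] := by
      intro n _
      have h1 := htBn n
      simp only [hBn, mem_iUnion] at h1
      obtain ⟨σ, hb, hσ⟩ := h1
      exact ⟨σ, hb, rfl, hσ⟩
    have good_step : ∀ l, Good l → ∃ k, k ≤ u l.length ∧ Good (l ++ [k]) := by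
      intro l hGl
      set m := l.length with hm
      set Fb : ℕ → Set ℕ := fun k => {n | m + 1 ≤ n ∧ ∃ σ : ℕ → ℕ,
        (∀ i < n, σ i ≤ u i) ∧ takeL σ m = l ∧ σ m = k ∧ t ∈ A (takeL σ n)} with hFb
    -- every n ≥ m+1 is in some fiber with k ≤ u m
      have hcover : Set.Ici (m + 1) ⊆ ⋃ k ∈ Finset.range (u m + 1), Fb k := by
        intro n hn
        rw [mem_Ici] at hn
        obtain ⟨σ, hb, htake, hσ⟩ := hGl n (by omega)
        refine mem_biUnion (Finset.mem_range.2 (Nat.lt_succ_of_le (hb m (by omega)))) ?_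
        exact ⟨hn, σ, hb, htake, rfl, hσ⟩
      have hinf : ∃ k, k ≤ u m ∧ (Fb k).Infinite := by
        by_contra hcon
        push_neg at hcon
        have hfin : (⋃ k ∈ Finset.range (u m + 1), Fb k).Finite := by
          apply Set.Finite.biUnion (Finset.range (u m + 1)).finite_toSet
          intro k hk
          have := hcon k (by simpa using Nat.lt_succ_iff.1 (Finset.mem_range.1 hk))
          exact this
        exact (Set.Ici_infinite (m+1)) (hfin.subset hcover)
      obtain ⟨k, hk, hkinf⟩ := hinf
      refine ⟨k, hk, ?_⟩
      intro n hn
      rw [List.length_append, List.length_singleton] at hn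
      obtain ⟨n', hn'mem, hn'⟩ := hkinf.exists_gt n
      obtain ⟨hge, σ, hb, htake, hval, hσ⟩ := hn'mem
      refine ⟨σ, fun i hi => hb i (by omega), ?_, hmono σ n n' hn'.le hσ⟩
      rw [List.length_append, List.length_singleton, ← hm, takeL_succ, htake, hval]
    -- build the branch
    set gk : List ℕ → ℕ := fun l => if h : Good l then Classical.choose (good_step l h) else 0
      with hgk
    set M : ℕ → List ℕ := built gk with hM
    have hMlen : ∀ n, (M n).length = n := fun n => by rw [hM]; simp
    have hMgood : ∀ n, Good (M n) := by
      intro n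
      induction n with
      | zero => exact good_nil
      | succ n ih =>
        have h2 : M (n + 1) = M n ++ [gk (M n)] := rfl
        have h3 : gk (M n) = Classical.choose (good_step (M n) ih) := by
          simp only [hgk]; rw [dif_pos ih]
        rw [h2, h3]
        exact (Classical.choose_spec (good_step (M n) ih)).2
    set σs : ℕ → ℕ := fun n => (M (n+1)).getD n 0 with hσs
    have hMtake : ∀ n, takeL σs n = M n := by
      intro n
      induction n with
      | zero => rfl
      | succ n ih =>
        rw [takeL_succ, ih]
        have h2 : M (n + 1) = M n ++ [gk (M n)] := rfl
        have h4 : σs n = gk (M n) := by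
          show (M (n+1)).getD n 0 = _
          rw [h2]
          have h5 := getD_concat_length (M n) (gk (M n))
          rwa [hMlen] at h5
        rw [h4, h2]
    refine ⟨σs, fun n => ?_⟩
    rw [hMtake n]
    obtain ⟨σ, _, htake, hσ⟩ := hMgood n (M n).length (le_refl _)
    rwa [htake] at hσ
  -- measure bound
  refine ⟨B, hBmeas, hBsub, ?_⟩
  have key : ∀ n, μ (Suslin A) ≤ μ (Cn n) + ε := by
    intro n
    calc μ (Suslin A) ≤ μ (Atil A (L n)) + ∑ k ∈ Finset.range n, (δ k : ℝ≥0∞) := hchain n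
    _ ≤ μ (Cn n) + ∑' k, (δ k : ℝ≥0∞) :=
        add_le_add (measure_mono (hAtilCn n)) (ENNReal.sum_le_tsum _)
    _ ≤ μ (Cn n) + ε := add_le_add_right hδsum.le _
  have hBinf : μ B = ⨅ n, μ (Cn n) := by
    rw [hB]
    exact hCnanti.measure_iInter (fun n => (hCnmeas n).nullMeasurableSet)
      ⟨0, measure_ne_top μ _⟩
  rw [hBinf]
  calc μ (Suslin A) ≤ ⨅ n, (μ (Cn n) + ε) := le_iInf (fun n => key n)
  _ = (⨅ n, μ (Cn n)) + ε := by
      rw [ENNReal.iInf_add]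

/-- The Suslin operation applied to measurable sets yields a null-measurable set. -/
theorem suslin_nullMeasurable (hA : ∀ s, MeasurableSet (A s))
    (hmono : ∀ (σ : ℕ → ℕ) m n, m ≤ n → A (takeL σ n) ⊆ A (takeL σ m)) :
    NullMeasurableSet (Suslin A) μ := by
  have hex : ∀ n : ℕ, ∃ B : Set T, MeasurableSet B ∧ B ⊆ Suslin A ∧
      μ (Suslin A) ≤ μ B + ((n : ℝ≥0∞))⁻¹ := by
    intro n
    exact inner_approx μ hA hmono (by simp)
  choose Bs hBmeas hBsub hBle using hex
  set K : Set T := ⋃ n, Bs n with hK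
  have hKmeas : MeasurableSet K := MeasurableSet.iUnion hBmeas
  have hKsub : K ⊆ Suslin A := iUnion_subset hBsub
  have hKge : μ (Suslin A) ≤ μ K := by
    have htend : Tendsto (fun n : ℕ => μ K + ((n : ℝ≥0∞))⁻¹) atTop (nhds (μ K)) := by
      have := ENNReal.tendsto_inv_nat_nhds_zero
      have h2 := Tendsto.const_add (μ K) this
      simpa using h2
    refine ge_of_tendsto htend (Filter.Eventually.of_forall fun n => ?_)
    refine le_trans (hBle n) (add_le_add_left ?_ _)
    rw [hK]
    exact measure_mono (subset_iUnion _ n)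
  -- conclude null-measurability
  have hdiff : μ (Suslin A \ K) = 0 := by
    have hsub2 : Suslin A \ K ⊆ toMeasurable μ (Suslin A) \ K :=
      diff_subset_diff_left (subset_toMeasurable μ _)
    have : μ (toMeasurable μ (Suslin A) \ K) = μ (toMeasurable μ (Suslin A)) - μ K := by
      apply measure_diff (hKsub.trans (subset_toMeasurable μ _)) hKmeas.nullMeasurableSet
        (measure_ne_top μ _)
    have h0 : μ (toMeasurable μ (Suslin A) \ K) = 0 := by
      rw [this, measure_toMeasurable]
      exact tsub_eq_zero_of_le hKge
    exact measure_mono_null hsub2 h0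
  refine NullMeasurableSet.congr hKmeas.nullMeasurableSet (ae_eq_set.2 ⟨?_, hdiff⟩)
  rw [diff_eq_empty.2 hKsub]
  exact measure_empty

end Part1

/-! cylinders -/

def cyl (s : List ℕ) : Set (ℕ → ℕ) := {x | takeL x s.length = s}

lemma mem_cyl {s : List ℕ} {x : ℕ → ℕ} : x ∈ cyl s ↔ takeL x s.length = s := Iff.rfl

@[simp] lemma cyl_nil : cyl ([] : List ℕ) = univ := by
  ext x; simp [cyl]

lemma mem_cyl_takeL {σ x : ℕ → ℕ} {n : ℕ} : x ∈ cyl (takeL σ n) ↔ ∀ i < n, x i = σ i := by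
  rw [mem_cyl, takeL_length, takeL_eq_iff]

lemma self_mem_cyl_takeL (x : ℕ → ℕ) (n : ℕ) : x ∈ cyl (takeL x n) :=
  mem_cyl_takeL.2 fun _ _ => rfl

lemma mem_cyl_iff_forall {s : List ℕ} {x : ℕ → ℕ} :
    x ∈ cyl s ↔ ∀ i (h : i < s.length), x i = s.getD i 0 := by
  rw [mem_cyl]
  constructor
  · intro h i hi
    rw [← h, takeL_getD hi]
  · intro h
    apply List.ext_getElem (by simp)
    intro i h1 h2
    simp only [takeL, List.getElem_map, List.getElem_range]
    rw [h i (by simpa using h2), List.getD_eq_getElem _ _ h2]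

lemma measurable_cyl (s : List ℕ) : MeasurableSet (cyl s) := by
  have : cyl s = ⋂ (i : ℕ) (h : i < s.length), (fun x : ℕ → ℕ => x i) ⁻¹' {s.getD i 0} := by
    ext x
    simp only [mem_iInter, mem_preimage, mem_singleton_iff]
    exact mem_cyl_iff_forall
  rw [this]
  exact MeasurableSet.iInter fun i => MeasurableSet.iInter fun h =>
    (measurable_pi_apply i) (measurableSet_singleton _)


section Part2
variable {α : Type*} [MeasurableSpace α]

/-- A well-behaved pair of schemes representing a product-measurable set. -/
structure GoodPair (F : List ℕ → Set α) (G : List ℕ → Set (ℕ → ℕ)) : Prop where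
  measF : ∀ s, MeasurableSet (F s)
  monoF : ∀ (σ : ℕ → ℕ) {m n : ℕ}, m ≤ n → F (takeL σ n) ⊆ F (takeL σ m)
  monoG : ∀ (σ : ℕ → ℕ) {m n : ℕ}, m ≤ n → G (takeL σ n) ⊆ G (takeL σ m)
  closedG : ∀ (s : List ℕ) (x : ℕ → ℕ),
    (∀ L, ∃ y ∈ G s, ∀ i < L, y i = x i) → x ∈ G s
  smallG : ∀ (σ : ℕ → ℕ) (L : ℕ), ∃ n, ∀ x ∈ G (takeL σ n), ∀ y ∈ G (takeL σ n),
    ∀ i < L, x i = y i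

/-- Sets representable by a good pair of schemes. -/
def Rep (E : Set (α × (ℕ → ℕ))) : Prop :=
  ∃ F G, GoodPair F G ∧
    E = {p | ∃ σ : ℕ → ℕ, ∀ n, p.1 ∈ F (takeL σ n) ∧ p.2 ∈ G (takeL σ n)}

lemma rep_rect {A : Set α} (hA : MeasurableSet A) (s₀ : List ℕ) : Rep (A ×ˢ cyl s₀) := by
  refine ⟨fun _ => A, fun s => cyl s₀ ∩ cyl s, ⟨fun _ => hA, fun _ _ _ _ => le_refl _, ?_, ?_, ?_⟩, ?_⟩
  · -- monoG
    intro σ m n hmn x hx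
    obtain ⟨h1, h2⟩ := hx
    refine ⟨h1, mem_cyl_takeL.2 fun i hi => mem_cyl_takeL.1 h2 i (by omega)⟩
  · -- closedG
    intro s x happ
    obtain ⟨y, ⟨hy0, hys⟩, hagree⟩ := happ (max s₀.length s.length)
    constructor
    · rw [mem_cyl_iff_forall] at hy0 ⊢
      intro i hi
      rw [← hagree i (by omega), hy0 i hi]
    · rw [mem_cyl_iff_forall] at hys ⊢
      intro i hi
      rw [← hagree i (by omega), hys i hi]
  · -- smallG
    intro σ L
    refine ⟨L, fun x hx y hy i hi => ?_⟩
    rw [mem_cyl_takeL.1 hx.2 i hi, mem_cyl_takeL.1 hy.2 i hi]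
  · -- set equality
    ext ⟨t, x⟩
    simp only [mem_prod, mem_setOf_eq]
    constructor
    · rintro ⟨ht, hx⟩
      exact ⟨x, fun n => ⟨ht, hx, self_mem_cyl_takeL x n⟩⟩
    · rintro ⟨σ, hσ⟩
      exact ⟨(hσ 0).1, (hσ 0).2.1⟩

lemma rep_empty : Rep (∅ : Set (α × (ℕ → ℕ))) := by
  have := rep_rect (MeasurableSet.empty (α := α)) []
  rwa [Set.empty_prod] at this

lemma rep_univ : Rep (univ : Set (α × (ℕ → ℕ))) := by
  have := rep_rect (MeasurableSet.univ (α := α)) []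
  rwa [cyl_nil, Set.univ_prod_univ] at this

lemma rep_iUnion {E : ℕ → Set (α × (ℕ → ℕ))} (h : ∀ i, Rep (E i)) : Rep (⋃ i, E i) := by
  choose F G hFG hEq using h
  classical
  refine ⟨fun s => match s with | [] => univ | i :: s' => F i s',
    fun s => match s with | [] => univ | i :: s' => G i s', ⟨?_, ?_, ?_, ?_, ?_⟩, ?_⟩
  · rintro (_ | ⟨i, s'⟩)
    · exact MeasurableSet.univ
    · exact (hFG i).measF s'
  · rintro σ m n hmn
    match m, n with
    | 0, n => intro x hx; rw [takeL_zero]; exact mem_univ x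
    | m + 1, n + 1 =>
      rw [takeL_succ_eq_cons σ m, takeL_succ_eq_cons σ n]
      exact (hFG (σ 0)).monoF _ (by omega)
  · rintro σ m n hmn
    match m, n with
    | 0, n => intro x hx; rw [takeL_zero]; exact mem_univ x
    | m + 1, n + 1 =>
      rw [takeL_succ_eq_cons σ m, takeL_succ_eq_cons σ n]
      exact (hFG (σ 0)).monoG _ (by omega)
  · rintro (_ | ⟨i, s'⟩) x hx
    · exact mem_univ x
    · exact (hFG i).closedG s' x hx
  · intro σ L
    obtain ⟨n, hn⟩ := (hFG (σ 0)).smallG (fun j => σ (j + 1)) L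
    refine ⟨n + 1, ?_⟩
    rw [takeL_succ_eq_cons σ n]
    exact hn
  · ext ⟨t, x⟩
    simp only [mem_iUnion, mem_setOf_eq]
    constructor
    · rintro ⟨i, hp⟩
      rw [hEq i] at hp
      obtain ⟨τ, hτ⟩ := hp
      refine ⟨fun m => Nat.rec i (fun j _ => τ j) m, fun n => ?_⟩
      match n with
      | 0 => exact ⟨mem_univ t, mem_univ x⟩
      | n + 1 =>
        rw [takeL_cons i τ n]
        exact hτ n
    · rintro ⟨σ, hσ⟩
      refine ⟨σ 0, ?_⟩
      rw [hEq (σ 0)]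
      refine ⟨fun j => σ (j + 1), fun n => ?_⟩
      have := hσ (n + 1)
      rwa [takeL_succ_eq_cons σ n] at this

lemma rep_union {X Y : Set (α × (ℕ → ℕ))} (hX : Rep X) (hY : Rep Y) : Rep (X ∪ Y) := by
  classical
  have : X ∪ Y = ⋃ i : ℕ, (if i = 0 then X else Y) := by
    ext p
    simp only [mem_union, mem_iUnion]
    constructor
    · rintro (h | h)
      · exact ⟨0, by simpa using h⟩
      · exact ⟨1, by simpa using h⟩
    · rintro ⟨i, hi⟩
      by_cases h : i = 0
      · left; simpa [h] using hi
      · right; simpa [h] using hi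
  rw [this]
  exact rep_iUnion fun i => by by_cases h : i = 0 <;> simp [h, hX, hY]

lemma rep_iUnion' {ι : Type*} [Countable ι] {E : ι → Set (α × (ℕ → ℕ))}
    (h : ∀ i, Rep (E i)) : Rep (⋃ i, E i) := by
  rcases isEmpty_or_nonempty ι with hι | hι
  · simp only [iUnion_of_empty]
    exact rep_empty
  · obtain ⟨f, hf⟩ := exists_surjective_nat ι
    have : (⋃ i, E i) = ⋃ n, E (f n) := (hf.iUnion_comp E).symm
    rw [this]
    exact rep_iUnion fun n => h (f n)

/-! pairing combinatorics -/

/-- Largest `n` such that all `Nat.pair i j`, `j < n`, are `< m`. -/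
def kk (i m : ℕ) : ℕ := Nat.find (⟨m, Nat.right_le_pair i m⟩ : ∃ n, m ≤ Nat.pair i n)

lemma kk_lt {i m j : ℕ} (h : j < kk i m) : Nat.pair i j < m := by
  have := Nat.find_min (⟨m, Nat.right_le_pair i m⟩ : ∃ n, m ≤ Nat.pair i n) h
  omega

lemma kk_mono (i : ℕ) {m m' : ℕ} (h : m ≤ m') : kk i m ≤ kk i m' :=
  Nat.find_mono fun n hn => le_trans h hn

lemma kk_large (i n : ℕ) : ∃ m, n ≤ kk i m := by
  refine ⟨1 + (Finset.range n).sup (fun j => Nat.pair i j), ?_⟩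
  rw [kk, Nat.le_find_iff]
  intro j hj
  push_neg
  have h2 : Nat.pair i j ≤ (Finset.range n).sup (fun j => Nat.pair i j) := by
    simpa using Finset.le_sup (f := fun j => Nat.pair i j) (Finset.mem_range.2 hj)
  omega

/-- Extract the `i`-th interleaved subsequence of a finite list. -/
def extract (i : ℕ) (s : List ℕ) : List ℕ :=
  takeL (fun j => s.getD (Nat.pair i j) 0) (kk i s.length)

lemma extract_takeL (i : ℕ) (σ : ℕ → ℕ) (m : ℕ) :
    extract i (takeL σ m) = takeL (fun j => σ (Nat.pair i j)) (kk i m) := by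
  rw [extract, takeL_length, takeL_eq_iff]
  intro j hj
  exact takeL_getD (kk_lt hj)

lemma rep_iInter {E : ℕ → Set (α × (ℕ → ℕ))} (h : ∀ i, Rep (E i)) : Rep (⋂ i, E i) := by
  choose F G hFG hEq using h
  refine ⟨fun s => ⋂ (i : ℕ) (_ : i < s.length), F i (extract i s),
    fun s => ⋂ (i : ℕ) (_ : i < s.length), G i (extract i s), ⟨?_, ?_, ?_, ?_, ?_⟩, ?_⟩
  · intro s
    exact MeasurableSet.iInter fun i => MeasurableSet.iInter fun _ => (hFG i).measF _
  · intro σ m n hmn x hx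
    simp only [takeL_length, mem_iInter] at hx ⊢
    intro i hi
    rw [extract_takeL]
    refine (hFG i).monoF _ (kk_mono i hmn) ?_
    rw [← extract_takeL]
    exact hx i (by omega)
  · intro σ m n hmn x hx
    simp only [takeL_length, mem_iInter] at hx ⊢
    intro i hi
    rw [extract_takeL]
    refine (hFG i).monoG _ (kk_mono i hmn) ?_
    rw [← extract_takeL]
    exact hx i (by omega)
  · intro s x happ
    simp only [mem_iInter]
    intro i hi
    refine (hFG i).closedG _ x fun L => ?_
    obtain ⟨y, hy, hagree⟩ := happ L
    simp only [mem_iInter] at hy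
    exact ⟨y, hy i hi, hagree⟩
  · intro σ L
    obtain ⟨n₀, hn₀⟩ := (hFG 0).smallG (fun j => σ (Nat.pair 0 j)) L
    obtain ⟨m₀, hm₀⟩ := kk_large 0 n₀
    refine ⟨max m₀ 1, fun x hx y hy i hi => ?_⟩
    simp only [takeL_length, mem_iInter] at hx hy
    have hx0 : x ∈ G 0 (extract 0 (takeL σ (max m₀ 1))) := hx 0 (by omega)
    have hy0 : y ∈ G 0 (extract 0 (takeL σ (max m₀ 1))) := hy 0 (by omega)
    rw [extract_takeL] at hx0 hy0
    have hk : n₀ ≤ kk 0 (max m₀ 1) := le_trans hm₀ (kk_mono 0 (le_max_left _ _))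
    exact hn₀ x ((hFG 0).monoG _ hk hx0) y ((hFG 0).monoG _ hk hy0) i hi
  · apply Set.eq_of_subset_of_subset
    · intro p hp
      have hp' : ∀ i, ∃ τ : ℕ → ℕ, ∀ n, p.1 ∈ F i (takeL τ n) ∧ p.2 ∈ G i (takeL τ n) := by
        intro i
        have hpi : p ∈ E i := mem_iInter.1 hp i
        rwa [hEq i] at hpi
      choose τ hτ using hp'
      refine ⟨fun q => τ (Nat.unpair q).1 (Nat.unpair q).2, fun n => ?_⟩
      have hrw : ∀ i : ℕ, extract i (takeL (fun q => τ (Nat.unpair q).1 (Nat.unpair q).2) n)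
          = takeL (τ i) (kk i n) := by
        intro i
        rw [extract_takeL, takeL_eq_iff]
        intro j hj
        simp [Nat.unpair_pair]
      constructor
      · refine mem_iInter₂.2 fun i hi => ?_
        rw [hrw i]
        exact (hτ i (kk i n)).1
      · refine mem_iInter₂.2 fun i hi => ?_
        rw [hrw i]
        exact (hτ i (kk i n)).2
    · rintro p ⟨σ, hσ⟩
      refine mem_iInter.2 fun i => ?_
      rw [hEq i]
      refine ⟨fun j => σ (Nat.pair i j), fun n => ?_⟩
      obtain ⟨m₁, hm₁⟩ := kk_large i n
      set m := max m₁ (i + 1) with hm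
      obtain ⟨h1, h2⟩ := hσ m
      have hkn : n ≤ kk i m := le_trans hm₁ (kk_mono i (le_max_left _ _))
      constructor
      · have hmem := mem_iInter₂.1 h1 i (by rw [takeL_length]; omega)
        rw [extract_takeL] at hmem
        exact (hFG i).monoF _ hkn hmem
      · have hmem := mem_iInter₂.1 h2 i (by rw [takeL_length]; omega)
        rw [extract_takeL] at hmem
        exact (hFG i).monoG _ hkn hmem

lemma rep_iInter' {ι : Type*} [Countable ι] {E : ι → Set (α × (ℕ → ℕ))}
    (h : ∀ i, Rep (E i)) : Rep (⋂ i, E i) := by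
  rcases isEmpty_or_nonempty ι with hι | hι
  · simp only [iInter_of_empty]
    exact rep_univ
  · obtain ⟨f, hf⟩ := exists_surjective_nat ι
    have : (⋂ i, E i) = ⋂ n, E (f n) := (hf.iInter_comp E).symm
    rw [this]
    exact rep_iInter fun n => h (f n)

lemma rep_prod_univ {A : Set α} (hA : MeasurableSet A) : Rep (A ×ˢ (univ : Set (ℕ → ℕ))) := by
  have := rep_rect hA []
  rwa [cyl_nil] at this

lemma rep_univ_compl_cyl (s₀ : List ℕ) :
    Rep ((univ : Set α) ×ˢ (cyl s₀)ᶜ) := by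
  have hdecomp : (cyl s₀)ᶜ = ⋃ (s : {s : List ℕ // s.length = s₀.length ∧ s ≠ s₀}), cyl s.1 := by
    ext x
    simp only [mem_compl_iff, mem_iUnion, mem_cyl]
    constructor
    · intro hx
      refine ⟨⟨takeL x s₀.length, by simp, fun hc => hx hc⟩, ?_⟩
      show x ∈ cyl (takeL x s₀.length)
      exact self_mem_cyl_takeL x s₀.length
    · rintro ⟨s, hx⟩
      intro hc
      apply s.2.2
      have hx' : takeL x s.1.length = s.1 := hx
      rw [s.2.1] at hx'
      rw [← hx', hc]
  rw [hdecomp, Set.prod_iUnion]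
  exact rep_iUnion' fun s => by
    have := rep_rect (MeasurableSet.univ (α := α)) s.1
    exact this

lemma rep_univ_prod {B : Set (ℕ → ℕ)} (hB : MeasurableSet B) :
    Rep ((univ : Set α) ×ˢ B) ∧ Rep ((univ : Set α) ×ˢ Bᶜ) := by
  -- σ-algebra of good B's
  classical
  set m₁ : MeasurableSpace (ℕ → ℕ) :=
    { MeasurableSet' := fun B => Rep ((univ : Set α) ×ˢ B) ∧ Rep ((univ : Set α) ×ˢ Bᶜ)
      measurableSet_empty := by
        constructor
        · rw [Set.prod_empty]; exact rep_empty
        · rw [compl_empty, Set.univ_prod_univ]; exact rep_univ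
      measurableSet_compl := by
        intro B ⟨h1, h2⟩
        exact ⟨h2, by rwa [compl_compl]⟩
      measurableSet_iUnion := by
        intro f hf
        constructor
        · rw [Set.prod_iUnion]
          exact rep_iUnion fun i => (hf i).1
        · rw [compl_iUnion, Set.prod_iInter]
          exact rep_iInter fun i => (hf i).2 }
  have hpoint : ∀ (i k : ℕ), {x : ℕ → ℕ | x i = k} =
      ⋃ (s : {s : List ℕ // s.length = i + 1 ∧ s.getD i 0 = k}), cyl s.1 := by
    intro i k
    ext x
    simp only [mem_setOf_eq, mem_iUnion]
    constructor
    · intro hx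
      refine ⟨⟨takeL x (i + 1), by simp, by rw [takeL_getD (by omega)]; exact hx⟩,
        self_mem_cyl_takeL x (i + 1)⟩
    · rintro ⟨s, hx⟩
      rw [mem_cyl_iff_forall] at hx
      rw [hx i (by rw [s.2.1]; omega), s.2.2]
  have hpre : ∀ (i : ℕ) (A : Set ℕ), Rep ((univ : Set α) ×ˢ ((fun x : ℕ → ℕ => x i) ⁻¹' A)) := by
    intro i A
    have : (fun x : ℕ → ℕ => x i) ⁻¹' A = ⋃ (k : A), {x : ℕ → ℕ | x i = k.1} := by
      ext x
      simp [eq_comm]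
    rw [this, Set.prod_iUnion]
    refine rep_iUnion' fun k => ?_
    rw [hpoint i k.1, Set.prod_iUnion]
    exact rep_iUnion' fun s => rep_rect MeasurableSet.univ s.1
  have hle : (MeasurableSpace.pi : MeasurableSpace (ℕ → ℕ)) ≤ m₁ := by
    rw [MeasurableSpace.pi]
    refine iSup_le fun i => ?_
    rintro B ⟨A, _, rfl⟩
    constructor
    · exact hpre i A
    · rw [← Set.preimage_compl]
      exact hpre i Aᶜ
  exact hle B hB

/-- Every product-measurable set is representable. -/
lemma rep_of_measurableSet {E : Set (α × (ℕ → ℕ))} (hE : MeasurableSet E) : Rep E := by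
  classical
  set m₀ : MeasurableSpace (α × (ℕ → ℕ)) :=
    { MeasurableSet' := fun E => Rep E ∧ Rep Eᶜ
      measurableSet_empty := ⟨rep_empty, by rw [compl_empty]; exact rep_univ⟩
      measurableSet_compl := by
        intro E ⟨h1, h2⟩
        exact ⟨h2, by rwa [compl_compl]⟩
      measurableSet_iUnion := by
        intro f hf
        constructor
        · exact rep_iUnion fun i => (hf i).1
        · rw [compl_iUnion]
          exact rep_iInter fun i => (hf i).2 }
  have hle : (Prod.instMeasurableSpace : MeasurableSpace (α × (ℕ → ℕ))) ≤ m₀ := by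
    refine sup_le ?_ ?_
    · rintro E ⟨A, hA, rfl⟩
      constructor
      · rw [← Set.prod_univ]
        exact rep_prod_univ hA
      · rw [← Set.preimage_compl, ← Set.prod_univ]
        exact rep_prod_univ hA.compl
    · rintro E ⟨B, hB, rfl⟩
      constructor
      · rw [← Set.univ_prod]
        exact (rep_univ_prod hB).1
      · rw [← Set.preimage_compl, ← Set.univ_prod]
        exact (rep_univ_prod hB.compl).1
  exact (hle E hE).1

/-- A decreasing branch of nonempty "closed, shrinking" sets has a common point. -/
lemma branch_nonempty {F : List ℕ → Set α} {G : List ℕ → Set (ℕ → ℕ)} (hg : GoodPair F G)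
    (σ : ℕ → ℕ) (h : ∀ n, (G (takeL σ n)).Nonempty) :
    ∃ x, ∀ n, x ∈ G (takeL σ n) := by
  choose xs hxs using h
  choose nf hnf using fun L => hg.smallG σ L
  refine ⟨fun i => xs (nf (i + 1)) i, fun n => ?_⟩
  apply hg.closedG
  intro L
  set m := max n ((Finset.range L).sup fun i => nf (i + 1)) with hm
  refine ⟨xs m, hg.monoG σ (le_max_left _ _) (hxs m), fun i hi => ?_⟩
  have hles : nf (i + 1) ≤ m := by
    refine le_trans ?_ (le_max_right _ _)
    simpa using Finset.le_sup (f := fun i => nf (i + 1)) (Finset.mem_range.2 hi)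
  exact hnf (i + 1) (xs m) (hg.monoG σ hles (hxs m)) (xs (nf (i + 1))) (hxs (nf (i + 1))) i
    (by omega)

/-- The projection of a product-measurable set is a Suslin set over measurable sets. -/
theorem proj_rep {E : Set (α × (ℕ → ℕ))} (hE : MeasurableSet E) :
    ∃ A : List ℕ → Set α, (∀ s, MeasurableSet (A s)) ∧
      (∀ (σ : ℕ → ℕ) (m n : ℕ), m ≤ n → A (takeL σ n) ⊆ A (takeL σ m)) ∧
      Prod.fst '' E = Suslin A := by
  classical
  obtain ⟨F, G, hg, hEq⟩ := rep_of_measurableSet hE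
  refine ⟨fun s => if (G s).Nonempty then F s else ∅, fun s => ?_, ?_, ?_⟩
  · by_cases h : (G s).Nonempty
    · simpa [h] using hg.measF s
    · simp [h]
  · intro σ m n hmn x hx
    simp only [] at hx ⊢
    by_cases hn : (G (takeL σ n)).Nonempty
    · rw [if_pos hn] at hx
      rw [if_pos (hn.mono (hg.monoG σ hmn))]
      exact hg.monoF σ hmn hx
    · rw [if_neg hn] at hx
      exact absurd hx (notMem_empty x)
  · ext t
    simp only [mem_image, Suslin, mem_setOf_eq]
    constructor
    · rintro ⟨⟨t', x⟩, hp, rfl⟩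
      rw [hEq] at hp
      obtain ⟨σ, hσ⟩ := hp
      refine ⟨σ, fun n => ?_⟩
      rw [if_pos ⟨x, (hσ n).2⟩]
      exact (hσ n).1
    · rintro ⟨σ, hσ⟩
      have hne : ∀ n, (G (takeL σ n)).Nonempty := by
        intro n
        have := hσ n
        by_contra h
        rw [if_neg h] at this
        exact notMem_empty t this
      obtain ⟨x, hx⟩ := branch_nonempty hg σ hne
      refine ⟨(t, x), ?_, rfl⟩
      rw [hEq]
      refine ⟨σ, fun n => ⟨?_, hx n⟩⟩
      have := hσ n
      rwa [if_pos (hne n)] at this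

end Part2

/-- The measurable projection theorem for a finite measure and the Baire space `ℕ → ℕ`. -/
theorem nullMeasurable_proj {T : Type*} [MeasurableSpace T] (μ : Measure T) [IsFiniteMeasure μ]
    {E : Set (T × (ℕ → ℕ))} (hE : MeasurableSet E) :
    NullMeasurableSet (Prod.fst '' E) μ := by
  obtain ⟨A, hA, hmono, heq⟩ := proj_rep hE
  rw [heq]
  exact suslin_nullMeasurable μ hA hmono

end SuslinProj

open SuslinProj in
theorem stmt8 {T : Type*} [MeasurableSpace T] (μ : Measure T) [IsFiniteMeasure μ]
    {S : Type*} [MetricSpace S] [TopologicalSpace.SeparableSpace S] [CompleteSpace S]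
    [MeasurableSpace S] [BorelSpace S]
    (φ : T × S → EReal) (hφ : Measurable φ) :
    ∃ T' : Set T, MeasurableSet T' ∧ μ T'ᶜ = 0 ∧
      Measurable fun t : T' => ⨆ s : S, φ ((t : T), s) := by
  classical
  rcases isEmpty_or_nonempty S with hS | hS
  · refine ⟨Set.univ, MeasurableSet.univ, by simp, ?_⟩
    have hconst : (fun t : (Set.univ : Set T) => ⨆ s : S, φ ((t : T), s)) = fun _ => ⊥ := by
      funext t
      rw [iSup_of_empty]
    rw [hconst]
    exact measurable_const
  · haveI : SecondCountableTopology S := UniformSpace.secondCountable_of_separable S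
    obtain ⟨f, hfc, hfs⟩ := exists_nat_nat_continuous_surjective_of_completeSpace S
    set Aq : ℚ → Set T := fun q => {t : T | ∃ s : S, ((q : ℝ) : EReal) < φ (t, s)} with hAqdef
    have hAnull : ∀ q : ℚ, NullMeasurableSet (Aq q) μ := by
      intro q
      have hg : Measurable fun p : T × (ℕ → ℕ) => (p.1, f p.2) :=
        measurable_fst.prodMk (hfc.measurable.comp measurable_snd)
      have hset : MeasurableSet
          ((fun p : T × (ℕ → ℕ) => (p.1, f p.2)) ⁻¹' (φ ⁻¹' Set.Ioi ((q : ℝ) : EReal))) :=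
        hg (hφ measurableSet_Ioi)
      have himg : Prod.fst ''
          ((fun p : T × (ℕ → ℕ) => (p.1, f p.2)) ⁻¹' (φ ⁻¹' Set.Ioi ((q : ℝ) : EReal))) = Aq q := by
        ext t
        simp only [Set.mem_image, Set.mem_preimage, Set.mem_Ioi, hAqdef, Set.mem_setOf_eq,
          Prod.exists]
        constructor
        · rintro ⟨t', y, h, rfl⟩
          exact ⟨f y, h⟩
        · rintro ⟨s, hs⟩
          obtain ⟨y, rfl⟩ := hfs s
          exact ⟨t, y, hs, rfl⟩
      rw [← himg]
      exact nullMeasurable_proj μ hset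
    have hex : ∀ q : ℚ, ∃ B ⊆ Aq q, MeasurableSet B ∧ B =ᵐ[μ] Aq q := fun q =>
      (hAnull q).exists_measurable_subset_ae_eq
    choose B hBsub hBmeas hBae using hex
    set N : Set T := ⋃ q : ℚ, toMeasurable μ (Aq q ∆ B q) with hNdef
    have hNmeas : MeasurableSet N :=
      MeasurableSet.iUnion fun q => measurableSet_toMeasurable μ _
    have hNnull : μ N = 0 := by
      refine measure_iUnion_null fun q => ?_
      rw [measure_toMeasurable]
      exact (measure_symmDiff_eq_zero_iff).2 (hBae q).symm
    refine ⟨Nᶜ, hNmeas.compl, by rwa [compl_compl], ?_⟩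
    apply measurable_of_Ioi
    intro a
    have key : ∀ q : ℚ, (fun t : ↥(Nᶜ) => ⨆ s : S, φ ((t : T), s)) ⁻¹'
        (Set.Ioi ((q : ℝ) : EReal)) = Subtype.val ⁻¹' B q := by
      intro q
      ext t
      have ht : (t : T) ∉ Aq q ∆ B q := fun hc =>
        t.2 (Set.mem_iUnion.2 ⟨q, subset_toMeasurable μ _ hc⟩)
      have hiff : ((t : T) ∈ Aq q) ↔ ((t : T) ∈ B q) := by
        rw [Set.mem_symmDiff] at ht
        push_neg at ht
        exact ⟨ht.1, ht.2⟩
      simp only [Set.mem_preimage, Set.mem_Ioi]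
      rw [lt_iSup_iff]
      exact Iff.trans (Iff.rfl) hiff
    have hdecomp : (fun t : ↥(Nᶜ) => ⨆ s : S, φ ((t : T), s)) ⁻¹' Set.Ioi a =
        ⋃ q : {q : ℚ // a < ((q : ℝ) : EReal)}, Subtype.val ⁻¹' B q.1 := by
      ext t
      simp only [Set.mem_preimage, Set.mem_Ioi, Set.mem_iUnion]
      constructor
      · intro hlt
        obtain ⟨q, haq, hq⟩ := EReal.exists_rat_btwn_of_lt hlt
        refine ⟨⟨q, haq⟩, ?_⟩
        have := (Set.ext_iff.1 (key q) t).1 (by simpa using hq)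
        exact this
      · rintro ⟨⟨q, haq⟩, hq⟩
        have := (Set.ext_iff.1 (key q) t).2 hq
        simp only [Set.mem_preimage, Set.mem_Ioi] at this
        exact lt_trans haq this
    rw [hdecomp]
    exact MeasurableSet.iUnion fun q => measurable_subtype_coe (hBmeas q.1)
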